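/- Let (M,d) be a compact metric space, f: M → M a continuous map, X a Banach space, and A: M → B(X) an α-Hölder continuous map (for some α > 0). Let η > 0 be such that ‖A(y)‖ ≤ e^{η} for every y ∈ M, and let θ > 0 and C_0 > 0 be given. Then for every γ with 0 < γ < αθ/(η + αθ) there exist ε_0 > 0 and C > 0 such that the following holds: for all n ∈ ℕ and all x, p ∈ M satisfying d(f^i(x), f^i(p)) ≤ C_0 e^{−θ(n−i)} for every i = 0, 1, …, n, one has ‖A^{⌊γn⌋}(x) − A^{⌊γn⌋}(p)‖ ≤ C e^{−ε_0 n}. -/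

import Mathlib

open Filter MeasureTheory Metric Topology Set

noncomputable section
namespace QCDS

variable {𝕜 : Type*} [RCLike 𝕜]
variable {X : Type*} [NormedAddCommGroup X] [NormedSpace 𝕜 X]
variable {M : Type*} [MetricSpace M]

def cocycle (f : M → M) (A : M → X →L[𝕜] X) : ℕ → M → X →L[𝕜] X
  | 0, _ => 1
  | n + 1, x => (cocycle f A n (f x)).comp (A x)

def IsHolder (A : M → X →L[𝕜] X) (α : ℝ) : Prop :=
  ∃ C > 0, ∀ x y : M, ‖A x - A y‖ ≤ C * dist x y ^ α

def ClosingProperty (f : M → M) : Prop :=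
  ∃ c > 0, ∃ θ > 0, ∃ l : ℕ, 0 < l ∧
    ∀ x : M, ∀ n : ℕ, ∃ j ≤ l, ∃ p : M, f^[n + j] p = p ∧
      ∀ i ≤ n, dist (f^[i] x) (f^[i] p) ≤
        c * Real.exp (-θ * min (i : ℝ) ((n : ℝ) - (i : ℝ))) * dist (f^[n] x) x

def icNorm (T : X →L[𝕜] X) : ℝ :=
  sInf { r : ℝ | 0 < r ∧ ∃ s : Finset X, ⇑T '' ball (0 : X) 1 ⊆ ⋃ c ∈ s, ball c r }

def essSpecRadius (T : X →L[𝕜] X) : ℝ :=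
  ⨅ m : ℕ, icNorm (T ^ (m + 1)) ^ (((m : ℝ) + 1)⁻¹)

def specRadius (T : X →L[𝕜] X) : ℝ :=
  ⨅ m : ℕ, ‖T ^ (m + 1)‖ ^ (((m : ℝ) + 1)⁻¹)

def IsQuasiCompactOp (T : X →L[𝕜] X) : Prop := essSpecRadius T < specRadius T

def algMult (T : X →L[𝕜] X) (γ : 𝕜) : Cardinal :=
  Module.rank 𝕜 ↥(⨆ j : ℕ, LinearMap.ker ((((T - γ • (1 : X →L[𝕜] X)) ^ j : X →L[𝕜] X) : X →ₗ[𝕜] X)))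

def HasExceptionalPrefix (T : X →L[𝕜] X) (m : ℕ) (lo hi : ℕ → ℝ) : Prop :=
  ∃ γ : Fin m → 𝕜,
    (∀ i : Fin m, lo i ≤ ‖γ i‖ ∧ ‖γ i‖ ≤ hi i) ∧
    (∀ i j : Fin m, i ≤ j → ‖γ j‖ ≤ ‖γ i‖) ∧
    (∀ i : Fin m, essSpecRadius T < ‖γ i‖) ∧
    (∀ i : Fin m, LinearMap.ker (((T - γ i • (1 : X →L[𝕜] X) : X →L[𝕜] X) : X →ₗ[𝕜] X)) ≠ ⊥) ∧
    (∀ z : 𝕜, ((Finset.univ.filter fun i => γ i = z).card : Cardinal) ≤ algMult T z) ∧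
    (∀ z : 𝕜, LinearMap.ker (((T - z • (1 : X →L[𝕜] X) : X →L[𝕜] X) : X →ₗ[𝕜] X)) ≠ ⊥ → essSpecRadius T < ‖z‖ →
      (∃ i : Fin m, ‖γ i‖ < ‖z‖) →
      ((Finset.univ.filter fun i => γ i = z).card : Cardinal) = algMult T z)

def ConstantPeriodicData (f : M → M) (A : M → X →L[𝕜] X) (m : ℕ) (lam : ℕ → ℝ) : Prop :=
  ∀ n : ℕ, 0 < n → ∀ p : M, f^[n] p = p →
    IsQuasiCompactOp (cocycle f A n p) ∧
    HasExceptionalPrefix (cocycle f A n p) m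
      (fun i => Real.exp (n * lam i)) (fun i => Real.exp (n * lam i))

def NarrowPeriodicData (f : M → M) (A : M → X →L[𝕜] X) (m : ℕ) (lam : ℕ → ℝ) (δ : ℝ) :
    Prop :=
  ∀ n : ℕ, 0 < n → ∀ p : M, f^[n] p = p →
    IsQuasiCompactOp (cocycle f A n p) ∧
    HasExceptionalPrefix (cocycle f A n p) m
      (fun i => Real.exp (n * (lam i - δ))) (fun i => Real.exp (n * (lam i + δ)))

def gelfand (T : X →L[𝕜] X) (q : ℕ) : ℝ :=
  sInf { r : ℝ | ∃ V : Submodule 𝕜 X, IsClosed (V : Set X) ∧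
    Module.rank 𝕜 (X ⧸ V) = ((q - 1 : ℕ) : Cardinal) ∧ r = ‖T.comp V.subtypeL‖ }

def DominatedPair (f : M → M) (A : M → X →L[𝕜] X) (E F : M → Submodule 𝕜 X) : Prop :=
  (∀ x, IsClosed (E x : Set X)) ∧ (∀ x, IsClosed (F x : Set X)) ∧
  (∀ x, IsCompl (E x) (F x)) ∧
  (∃ P : M → X →L[𝕜] X, Continuous P ∧ (∀ x, ∀ v ∈ E x, P x v = v) ∧
    (∀ x, ∀ v ∈ F x, P x v = 0)) ∧
  (∀ x, ∀ n : ℕ, 0 < n → Submodule.map (cocycle f A n x : X →ₗ[𝕜] X) (E x) = E (f^[n] x)) ∧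
  (∀ x, ∀ n : ℕ, 0 < n → Submodule.map (cocycle f A n x : X →ₗ[𝕜] X) (F x) ≤ F (f^[n] x)) ∧
  ∃ C > 0, ∃ τ : ℝ, 0 < τ ∧ τ < 1 ∧
    ∀ x, ∀ n : ℕ, 0 < n → ∀ u ∈ E x, ∀ v ∈ F x, ‖u‖ = 1 → ‖v‖ = 1 →
      ‖cocycle f A n x v‖ ≤ C * τ ^ n * ‖cocycle f A n x u‖

def DominatedSplitting (f : M → M) (A : M → X →L[𝕜] X) (k : ℕ) : Prop :=
  ∃ E F : M → Submodule 𝕜 X, DominatedPair f A E F ∧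
    ∀ x, Module.rank 𝕜 (E x) = (k : Cardinal)

def egr (a : ℕ → ℝ) (L : EReal) : Prop :=
  ∀ c : ℝ, ((c : EReal) < L → ∀ᶠ n : ℕ in atTop, Real.exp (c * n) ≤ a n) ∧
    (L < (c : EReal) → ∀ᶠ n : ℕ in atTop, a n ≤ Real.exp (c * n))

def KappaBoundedBy [MeasurableSpace M] (f : M → M) (A : M → X →L[𝕜] X) (β : ℝ) : Prop :=
  ∀ μ : Measure M, IsProbabilityMeasure μ → Ergodic f μ →
    ∀ᵐ x ∂μ, ∀ᶠ n : ℕ in atTop, icNorm (cocycle f A n x) ≤ Real.exp (β * n)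


section Volume

variable [NormedSpace ℝ X] [IsScalarTower ℝ 𝕜 X] [FiniteDimensional ℝ 𝕜]

open Classical in
/-- The determinant of `T` restricted to the finite-dimensional subspace `V`, defined as
the ratio of Haar measures `ν (T '' B_V) / ν (B_{T V})` on the image subspace `T V`
(and `0` if `T` is not injective on `V`). -/
def subdet (T : X →L[𝕜] X) (V : Submodule 𝕜 X) : ℝ :=
  if h : FiniteDimensional 𝕜 V ∧ Set.InjOn T (V : Set X) then
    haveI : FiniteDimensional 𝕜 V := h.1
    haveI : FiniteDimensional 𝕜 (V.map (T : X →ₗ[𝕜] X)) :=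
      Module.Finite.map V (T : X →ₗ[𝕜] X)
    haveI : FiniteDimensional ℝ (V.map (T : X →ₗ[𝕜] X)) :=
      Module.Finite.trans (R := ℝ) 𝕜 _
    letI : MeasurableSpace (V.map (T : X →ₗ[𝕜] X)) := borel _
    haveI : BorelSpace (V.map (T : X →ₗ[𝕜] X)) := ⟨rfl⟩
    let ν : Measure (V.map (T : X →ₗ[𝕜] X)) := (Module.finBasis ℝ _).addHaar
    (ν {w : V.map (T : X →ₗ[𝕜] X) | ∃ v ∈ V, ‖v‖ ≤ 1 ∧ (w : X) = T v} /
      ν (Metric.closedBall 0 1)).toReal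
  else 0

/-- The maximal `q`-dimensional volume growth `V_q(T)`. -/
def volGrowth (T : X →L[𝕜] X) (q : ℕ) : ℝ :=
  sSup { r : ℝ | ∃ V : Submodule 𝕜 X, Module.rank 𝕜 V = (q : Cardinal) ∧ r = subdet T V }

end Volume

end QCDS

namespace QCDS

section Aux

variable {M : Type*} [MetricSpace M]
variable {X : Type*} [NormedAddCommGroup X] [NormedSpace ℝ X]

lemma norm_cocycle_le (f : M → M) (A : M → X →L[ℝ] X) (η : ℝ) (hη : 0 ≤ η)
    (hbound : ∀ y : M, ‖A y‖ ≤ Real.exp η) :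
    ∀ m : ℕ, ∀ x : M, ‖cocycle f A m x‖ ≤ Real.exp (η * m) := by
  intro m
  induction m with
  | zero =>
    intro x
    simp only [cocycle, Nat.cast_zero, mul_zero, Real.exp_zero]
    calc ‖(1 : X →L[ℝ] X)‖ = ‖ContinuousLinearMap.id ℝ X‖ := by
          rw [ContinuousLinearMap.one_def]
      _ ≤ 1 := ContinuousLinearMap.norm_id_le
  | succ m ih =>
    intro x
    have h1 : ‖cocycle f A (m + 1) x‖ ≤ ‖cocycle f A m (f x)‖ * ‖A x‖ := by
      simpa [cocycle] using ContinuousLinearMap.opNorm_comp_le (cocycle f A m (f x)) (A x)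
    calc ‖cocycle f A (m + 1) x‖ ≤ ‖cocycle f A m (f x)‖ * ‖A x‖ := h1
      _ ≤ Real.exp (η * m) * Real.exp η := by
          apply mul_le_mul (ih (f x)) (hbound x) (norm_nonneg _) (Real.exp_nonneg _)
      _ = Real.exp (η * (m + 1)) := by rw [← Real.exp_add]; ring_nf
      _ = Real.exp (η * ((m : ℕ) + 1 : ℕ)) := by push_cast; ring_nf

lemma norm_cocycle_sub_le (f : M → M) (A : M → X →L[ℝ] X) (η : ℝ) (hη : 0 ≤ η)
    (hbound : ∀ y : M, ‖A y‖ ≤ Real.exp η) :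
    ∀ m : ℕ, ∀ x p : M, ∀ B : ℝ, 0 ≤ B →
      (∀ i : ℕ, i < m → ‖A (f^[i] x) - A (f^[i] p)‖ ≤ B) →
      ‖cocycle f A m x - cocycle f A m p‖ ≤ m * Real.exp (η * m) * B := by
  intro m
  induction m with
  | zero => intro x p B hB _; simp [cocycle]
  | succ m ih =>
    intro x p B hB hAB
    have hrec : ∀ i : ℕ, i < m → ‖A (f^[i] (f x)) - A (f^[i] (f p))‖ ≤ B := by
      intro i hi
      have := hAB (i + 1) (by omega)
      simpa [Function.iterate_succ_apply] using this
    have hdecomp : cocycle f A (m + 1) x - cocycle f A (m + 1) p =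
        (cocycle f A m (f x) - cocycle f A m (f p)).comp (A x) +
          (cocycle f A m (f p)).comp (A x - A p) := by
      simp only [cocycle, ContinuousLinearMap.sub_comp, ContinuousLinearMap.comp_sub]
      abel
    have h1 : ‖(cocycle f A m (f x) - cocycle f A m (f p)).comp (A x)‖ ≤
        (m * Real.exp (η * m) * B) * Real.exp η := by
      calc ‖(cocycle f A m (f x) - cocycle f A m (f p)).comp (A x)‖
          ≤ ‖cocycle f A m (f x) - cocycle f A m (f p)‖ * ‖A x‖ :=
            ContinuousLinearMap.opNorm_comp_le _ _
        _ ≤ (m * Real.exp (η * m) * B) * Real.exp η := by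
            apply mul_le_mul (ih (f x) (f p) B hB hrec) (hbound x) (norm_nonneg _)
            positivity
    have h2 : ‖(cocycle f A m (f p)).comp (A x - A p)‖ ≤ Real.exp (η * m) * B := by
      calc ‖(cocycle f A m (f p)).comp (A x - A p)‖
          ≤ ‖cocycle f A m (f p)‖ * ‖A x - A p‖ := ContinuousLinearMap.opNorm_comp_le _ _
        _ ≤ Real.exp (η * m) * B := by
            apply mul_le_mul (norm_cocycle_le f A η hη hbound m (f p))
              (by simpa using hAB 0 (by omega)) (norm_nonneg _) (Real.exp_nonneg _)
    have hexp : Real.exp (η * m) * Real.exp η = Real.exp (η * (m + 1)) := by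
      rw [← Real.exp_add]; ring_nf
    have hexp2 : Real.exp (η * m) ≤ Real.exp (η * (m + 1)) := by
      apply Real.exp_le_exp.mpr; nlinarith
    calc ‖cocycle f A (m + 1) x - cocycle f A (m + 1) p‖
        ≤ ‖(cocycle f A m (f x) - cocycle f A m (f p)).comp (A x)‖ +
            ‖(cocycle f A m (f p)).comp (A x - A p)‖ := by
          rw [hdecomp]; exact norm_add_le _ _
      _ ≤ (m * Real.exp (η * m) * B) * Real.exp η + Real.exp (η * m) * B :=
          add_le_add h1 h2
      _ ≤ ((m : ℝ) + 1) * Real.exp (η * (m + 1)) * B := by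
          have hm : (0:ℝ) ≤ m := Nat.cast_nonneg m
          have e1 : (m : ℝ) * Real.exp (η * m) * B * Real.exp η =
              (m : ℝ) * Real.exp (η * ((m : ℝ) + 1)) * B := by rw [← hexp]; ring
          rw [e1]
          nlinarith [mul_le_mul_of_nonneg_right hexp2 hB]
      _ = ((m + 1 : ℕ) : ℝ) * Real.exp (η * ((m + 1 : ℕ) : ℝ)) * B := by push_cast; ring_nf

end Aux

/-- **Exponential closeness of cocycles along exponentially shadowed orbit segments.** If `A`
is `α`-Hölder with `‖A(y)‖ ≤ e^η` on `M`, then for every `0 < γ < αθ/(η + αθ)` there are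
`ε₀ > 0` and `C > 0` such that whenever the orbit segments of `x` and `p` satisfy
`d(f^i(x), f^i(p)) ≤ C₀ e^{−θ(n−i)}` for `0 ≤ i ≤ n`, one has
`‖A^{⌊γn⌋}(x) − A^{⌊γn⌋}(p)‖ ≤ C e^{−ε₀ n}`. -/
theorem cocycle_close_of_shadowing
    {M : Type*} [MetricSpace M] [CompactSpace M]
    {X : Type*} [NormedAddCommGroup X] [NormedSpace ℝ X] [CompleteSpace X]
    (f : M → M) (hf : Continuous f)
    (A : M → X →L[ℝ] X) (α : ℝ) (hα : 0 < α) (hA : IsHolder A α)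
    (η : ℝ) (hη : 0 < η) (hbound : ∀ y : M, ‖A y‖ ≤ Real.exp η)
    (θ : ℝ) (hθ : 0 < θ) (C₀ : ℝ) (hC₀ : 0 < C₀)
    (γ : ℝ) (hγ0 : 0 < γ) (hγ : γ < α * θ / (η + α * θ)) :
    ∃ ε₀ > 0, ∃ C > 0, ∀ n : ℕ, ∀ x p : M,
      (∀ i : ℕ, i ≤ n → dist (f^[i] x) (f^[i] p) ≤ C₀ * Real.exp (-θ * ((n : ℝ) - i))) →
      ‖cocycle f A ⌊γ * (n : ℝ)⌋₊ x - cocycle f A ⌊γ * (n : ℝ)⌋₊ p‖ ≤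
        C * Real.exp (-ε₀ * n) := by
  obtain ⟨CH, hCH, hHol⟩ := hA
  have hηθ : 0 < η + α * θ := by positivity
  have hγ' : γ * (η + α * θ) < α * θ := (lt_div_iff₀ hηθ).mp hγ
  set δ : ℝ := α * θ - γ * (η + α * θ) with hδdef
  have hδ : 0 < δ := by simp only [hδdef]; linarith
  have hγ1 : γ < 1 := by
    have : α * θ < η + α * θ := by linarith
    calc γ < α * θ / (η + α * θ) := hγ
      _ < 1 := (div_lt_one hηθ).mpr this
  have hC₀α : 0 < C₀ ^ α := Real.rpow_pos_of_pos hC₀ α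
  refine ⟨δ / 2, by positivity, (2 / δ) * CH * C₀ ^ α, by positivity, ?_⟩
  intro n x p hd
  set m : ℕ := ⌊γ * (n : ℝ)⌋₊ with hmdef
  have hm_le : (m : ℝ) ≤ γ * n := Nat.floor_le (by positivity)
  have hmn : (m : ℝ) ≤ n := by nlinarith [Nat.cast_nonneg (α := ℝ) n]
  have hmnℕ : m ≤ n := by exact_mod_cast Nat.cast_le.mp (by exact_mod_cast hmn)
  set B : ℝ := CH * (C₀ ^ α * Real.exp (-(α * θ) * ((n : ℝ) - m))) with hBdef
  have hB : 0 ≤ B := by positivity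
  have hAB : ∀ i : ℕ, i < m → ‖A (f^[i] x) - A (f^[i] p)‖ ≤ B := by
    intro i hi
    have hin : i ≤ n := le_trans (le_of_lt hi) hmnℕ
    have hdist := hd i hin
    have h1 : dist (f^[i] x) (f^[i] p) ^ α ≤
        (C₀ * Real.exp (-θ * ((n : ℝ) - i))) ^ α :=
      Real.rpow_le_rpow dist_nonneg hdist hα.le
    have h2 : (C₀ * Real.exp (-θ * ((n : ℝ) - i))) ^ α =
        C₀ ^ α * Real.exp (-(α * θ) * ((n : ℝ) - i)) := by
      rw [Real.mul_rpow hC₀.le (Real.exp_nonneg _), ← Real.exp_mul]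
      ring_nf
    have h3 : Real.exp (-(α * θ) * ((n : ℝ) - i)) ≤
        Real.exp (-(α * θ) * ((n : ℝ) - m)) := by
      apply Real.exp_le_exp.mpr
      have him : (i : ℝ) ≤ m := by exact_mod_cast le_of_lt hi
      nlinarith [mul_nonneg (mul_nonneg hα.le hθ.le) (sub_nonneg.mpr him)]
    calc ‖A (f^[i] x) - A (f^[i] p)‖ ≤ CH * dist (f^[i] x) (f^[i] p) ^ α := hHol _ _
      _ ≤ CH * (C₀ ^ α * Real.exp (-(α * θ) * ((n : ℝ) - m))) := by
          rw [← hBdef]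
          apply mul_le_mul_of_nonneg_left _ hCH.le
          calc dist (f^[i] x) (f^[i] p) ^ α
              ≤ C₀ ^ α * Real.exp (-(α * θ) * ((n : ℝ) - i)) := h2 ▸ h1
            _ ≤ C₀ ^ α * Real.exp (-(α * θ) * ((n : ℝ) - m)) :=
                mul_le_mul_of_nonneg_left h3 hC₀α.le
      _ = B := hBdef.symm
  have key := norm_cocycle_sub_le f A η hη.le hbound m x p B hB hAB
  have hn : (0 : ℝ) ≤ n := Nat.cast_nonneg n
  -- n ≤ (2/δ) * exp ((δ/2) * n)
  have hgrow : (n : ℝ) ≤ (2 / δ) * Real.exp ((δ / 2) * n) := by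
    have h := Real.add_one_le_exp ((δ / 2) * n)
    have h2 : (δ / 2) * n ≤ Real.exp ((δ / 2) * n) := by linarith
    rw [div_mul_eq_mul_div, le_div_iff₀ hδ]
    nlinarith
  -- exponent bound
  have hexpo : η * m + (-(α * θ) * ((n : ℝ) - m)) ≤ -δ * n := by
    simp only [hδdef]
    nlinarith
  have hexp_le : Real.exp (η * m) * Real.exp (-(α * θ) * ((n : ℝ) - m)) ≤
      Real.exp (-δ * n) := by
    rw [← Real.exp_add]; exact Real.exp_le_exp.mpr hexpo
  calc ‖cocycle f A m x - cocycle f A m p‖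
      ≤ (m : ℝ) * Real.exp (η * m) * B := key
    _ = (m : ℝ) * CH * C₀ ^ α *
        (Real.exp (η * m) * Real.exp (-(α * θ) * ((n : ℝ) - m))) := by
        rw [hBdef]; ring
    _ ≤ (n : ℝ) * CH * C₀ ^ α * Real.exp (-δ * n) := by
        apply mul_le_mul _ hexp_le (by positivity) (by positivity)
        nlinarith [mul_le_mul_of_nonneg_right
          (mul_le_mul_of_nonneg_right hmn hCH.le) hC₀α.le]
    _ ≤ ((2 / δ) * Real.exp ((δ / 2) * n)) * CH * C₀ ^ α * Real.exp (-δ * n) := by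
        apply mul_le_mul_of_nonneg_right _ (Real.exp_nonneg _)
        apply mul_le_mul_of_nonneg_right _ hC₀α.le
        exact mul_le_mul_of_nonneg_right hgrow hCH.le
    _ = (2 / δ) * CH * C₀ ^ α * (Real.exp ((δ / 2) * n) * Real.exp (-δ * n)) := by ring
    _ = (2 / δ) * CH * C₀ ^ α * Real.exp (-(δ / 2) * n) := by
        rw [← Real.exp_add]; ring_nf

end QCDS
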